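/- Let E and K be finite types. Let d i k : ℝ → ℝ be linear demand functions d i k (x) = (v i k / L i) · x with v i k > 0, L i > 0, let s i : ℝ → ℝ be supply functions with s i (y) ≥ 0 for all y, let w i k > 0 be weights, let R : Fin N → E → E → K → ℝ be nonnegative turning ratios, let λ : Fin N → E → K → ℝ be nonnegative exogenous inflows, let α : Fin N → E → K → ℝ be controls with 0 ≤ α t i k ≤ 1, let h > 0 satisfy h ≤ L i / v i k for all i, k, and let x⁰ : E → K → ℝ be nonnegative. Define the controlled FIFO trajectory recursively by: x 0 = x⁰; γ t i = sSup { γ ∈ [0,1] : ∀ j ∈ E, (∃ k, R t i j k > 0) → γ · Σ_{k ∈ K} Σ_{h' ∈ E} R t h' j k · α t h' k · d h' k (x t h' k) ≤ s j (Σ_{k ∈ K} w j k · x t j k) }; z t i k = γ t i · α t i k · d i k (x t i k); f t i j k = R t i j k · z t i k; and x (t+1) i k = x t i k + h·(λ t i k + Σ_{j ∈ E} f t j i k − z t i k). Then for every t, i, j, k: x t i k ≥ 0; 0 ≤ z t i k ≤ d i k (x t i k); f t i j k ≥ 0; f t i j k = R t i j k · z t i k; and Σ_{k ∈ K} Σ_{j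 ∈ E} f t j i k ≤ s i (Σ_{k ∈ K} w i k · x t i k). In other words, every trajectory of the controlled discrete-time multi-commodity дynamics is a feasible point of the discrete-time relaxed MC-FNC problem. -/
import Mathlib


/-- Every trajectory of the controlled discrete-time multi-commodity FIFO
dynamics (with linear demands `d i k (x) = (v i k / L i) * x`, controls
`α ∈ [0,1]`, FIFO coefficients `γ` given as the supremum in the FIFO rule, and
the mass-conservation update) is a feasible point of the discrete-time relaxed
MC-FNC problem. -/
theorem controlled_fifo_feasible
    (E K : Type*) [Fintype E] [Fintype K] (N : ℕ)
    (v : E → K → ℝ) (hv : ∀ i k, 0 < v i k)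
    (L : E → ℝ) (hL : ∀ i, 0 < L i)
    (s : E → ℝ → ℝ) (hs : ∀ i y, 0 ≤ s i y)
    (w : E → K → ℝ) (hw : ∀ i k, 0 < w i k)
    (R : Fin N → E → E → K → ℝ) (hR : ∀ t i j k, 0 ≤ R t i j k)
    (lam : Fin N → E → K → ℝ) (hlam : ∀ t i k, 0 ≤ lam t i k)
    (α : Fin N → E → K → ℝ) (hα : ∀ t i k, 0 ≤ α t i k ∧ α t i k ≤ 1)
    (h : ℝ) (hh : 0 < h) (hCFL : ∀ i k, h ≤ L i / v i k)
    (x0 : E → K → ℝ) (hx0 : ∀ i k, 0 ≤ x0 i k)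
    (x : Fin (N + 1) → E → K → ℝ) (z : Fin N → E → K → ℝ)
    (f : Fin N → E → E → K → ℝ) (γ : Fin N → E → ℝ)
    (hinit : x 0 = x0)
    (hγ : ∀ (t : Fin N) i, γ t i =
      sSup {g : ℝ | 0 ≤ g ∧ g ≤ 1 ∧ ∀ j, (∃ k, 0 < R t i j k) →
        g * (∑ k, ∑ h', R t h' j k * (α t h' k * ((v h' k / L h') * x t.castSucc h' k)))
          ≤ s j (∑ k, w j k * x t.castSucc j k)})
    (hz : ∀ (t : Fin N) i k,
      z t i k = γ t i * (α t i k * ((v i k / L i) * x t.castSucc i k)))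
    (hf : ∀ (t : Fin N) i j k, f t i j k = R t i j k * z t i k)
    (hupd : ∀ (t : Fin N) i k, x t.succ i k = x t.castSucc i k +
      h * (lam t i k + (∑ j, f t j i k) - z t i k)) :
    (∀ t i k, 0 ≤ x t i k) ∧
    (∀ (t : Fin N) i k,
      0 ≤ z t i k ∧ z t i k ≤ (v i k / L i) * x t.castSucc i k) ∧
    (∀ (t : Fin N) i j k, 0 ≤ f t i j k) ∧
    (∀ (t : Fin N) i j k, f t i j k = R t i j k * z t i k) ∧
    (∀ (t : Fin N) i,
      (∑ k, ∑ j, f t j i k) ≤ s i (∑ k, w i k * x t.castSucc i k)) := by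

  -- Properties of γ, assuming nonnegativity of the state at time t
  have hγprop : ∀ (t : Fin N), (∀ i k, 0 ≤ x t.castSucc i k) →
      ∀ i, 0 ≤ γ t i ∧ γ t i ≤ 1 ∧ ∀ j, (∃ k, 0 < R t i j k) →
        γ t i * (∑ k, ∑ h', R t h' j k * (α t h' k * ((v h' k / L h') * x t.castSucc h' k)))
          ≤ s j (∑ k, w j k * x t.castSucc j k) := by
    intro t hx i
    set S : Set ℝ := {g : ℝ | 0 ≤ g ∧ g ≤ 1 ∧ ∀ j, (∃ k, 0 < R t i j k) →
        g * (∑ k, ∑ h', R t h' j k * (α t h' k * ((v h' k / L h') * x t.castSucc h' k)))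
          ≤ s j (∑ k, w j k * x t.castSucc j k)} with hS
    have h0S : (0 : ℝ) ∈ S := by
      refine ⟨le_refl _, zero_le_one, fun j _ => ?_⟩
      rw [zero_mul]; exact hs j _
    have hne : S.Nonempty := ⟨0, h0S⟩
    have hbdd : BddAbove S := ⟨1, fun g hg => hg.2.1⟩
    have hγeq : γ t i = sSup S := hγ t i
    have h0 : 0 ≤ γ t i := hγeq ▸ le_csSup hbdd h0S
    have h1 : γ t i ≤ 1 := hγeq ▸ csSup_le hne (fun g hg => hg.2.1)
    refine ⟨h0, h1, fun j hj => ?_⟩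
    set c : ℝ := ∑ k, ∑ h', R t h' j k * (α t h' k * ((v h' k / L h') * x t.castSucc h' k)) with hc
    have hc0 : 0 ≤ c := by
      apply Finset.sum_nonneg; intro k _
      apply Finset.sum_nonneg; intro h' _
      exact mul_nonneg (hR t h' j k) (mul_nonneg (hα t h' k).1
        (mul_nonneg (div_nonneg (hv h' k).le (hL h').le) (hx h' k)))
    rcases hc0.lt_or_eq with hcpos | hczero
    · have hle : γ t i ≤ s j (∑ k, w j k * x t.castSucc j k) / c := by
        rw [hγeq]
        apply csSup_le hne
        intro g hg
        rw [le_div_iff₀ hcpos]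
        exact hg.2.2 j hj
      calc γ t i * c ≤ (s j (∑ k, w j k * x t.castSucc j k) / c) * c :=
            mul_le_mul_of_nonneg_right hle hc0
        _ = s j (∑ k, w j k * x t.castSucc j k) := div_mul_cancel₀ _ hcpos.ne'
    · rw [← hczero, mul_zero]; exact hs j _
  -- z bounds assuming nonnegativity at time t
  have hzprop : ∀ (t : Fin N), (∀ i k, 0 ≤ x t.castSucc i k) →
      ∀ i k, 0 ≤ z t i k ∧ z t i k ≤ (v i k / L i) * x t.castSucc i k := by
    intro t hx i k
    obtain ⟨hg0, hg1, -⟩ := hγprop t hx i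
    have hd0 : 0 ≤ (v i k / L i) * x t.castSucc i k :=
      mul_nonneg (div_nonneg (hv i k).le (hL i).le) (hx i k)
    constructor
    · rw [hz t i k]
      exact mul_nonneg hg0 (mul_nonneg (hα t i k).1 hd0)
    · rw [hz t i k]
      calc γ t i * (α t i k * ((v i k / L i) * x t.castSucc i k))
          ≤ 1 * (1 * ((v i k / L i) * x t.castSucc i k)) := by
            apply mul_le_mul hg1 _ (mul_nonneg (hα t i k).1 hd0) zero_le_one
            exact mul_le_mul_of_nonneg_right (hα t i k).2 hd0
        _ = (v i k / L i) * x t.castSucc i k := by ring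
  -- supply constraint assuming nonnegativity at time t
  have hsupply : ∀ (t : Fin N), (∀ i k, 0 ≤ x t.castSucc i k) →
      ∀ i, (∑ k, ∑ j, f t j i k) ≤ s i (∑ k, w i k * x t.castSucc i k) := by
    intro t hx i
    set a : E → ℝ := fun j => ∑ k, R t j i k * (α t j k * ((v j k / L j) * x t.castSucc j k))
      with ha
    have ha0 : ∀ j, 0 ≤ a j := by
      intro j
      apply Finset.sum_nonneg; intro k _
      exact mul_nonneg (hR t j i k) (mul_nonneg (hα t j k).1
        (mul_nonneg (div_nonneg (hv j k).le (hL j).le) (hx j k)))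
    have hsum : (∑ k, ∑ j, f t j i k) = ∑ j, γ t j * a j := by
      rw [Finset.sum_comm]
      apply Finset.sum_congr rfl
      intro j _
      rw [ha, Finset.mul_sum]
      apply Finset.sum_congr rfl
      intro k _
      rw [hf t j i k, hz t j k]; ring
    have hC : (∑ k, ∑ h', R t h' i k * (α t h' k * ((v h' k / L h') * x t.castSucc h' k)))
        = ∑ j, a j := Finset.sum_comm
    rw [hsum]
    by_cases hT : ∀ j, a j = 0
    · have : (∑ j, γ t j * a j) = 0 := Finset.sum_eq_zero fun j _ => by rw [hT j, mul_zero]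
      rw [this]; exact hs i _
    · push_neg at hT
      obtain ⟨j₁, hj₁⟩ := hT
      have hTE : (Finset.univ.filter (fun j => 0 < a j)).Nonempty :=
        ⟨j₁, by simp [lt_of_le_of_ne (ha0 j₁) (Ne.symm hj₁)]⟩
      obtain ⟨j₀, hj₀mem, hj₀max⟩ :=
        Finset.exists_max_image (Finset.univ.filter (fun j => 0 < a j)) (γ t) hTE
      have hj₀pos : 0 < a j₀ := (Finset.mem_filter.mp hj₀mem).2
      have hRj₀ : ∃ k, 0 < R t j₀ i k := by
        by_contra hcon
        push_neg at hcon
        have : a j₀ = 0 := Finset.sum_eq_zero fun k _ => by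
          rw [le_antisymm (hcon k) (hR t j₀ i k), zero_mul]
        exact absurd this hj₀pos.ne'
      have hstep : (∑ j, γ t j * a j) ≤ ∑ j, γ t j₀ * a j := by
        apply Finset.sum_le_sum
        intro j _
        rcases (ha0 j).lt_or_eq with hpos | hzero
        · exact mul_le_mul_of_nonneg_right
            (hj₀max j (Finset.mem_filter.mpr ⟨Finset.mem_univ j, hpos⟩)) hpos.le
        · rw [← hzero, mul_zero, mul_zero]
      calc (∑ j, γ t j * a j) ≤ ∑ j, γ t j₀ * a j := hstep
        _ = γ t j₀ * ∑ j, a j := (Finset.mul_sum _ _ _).symm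
        _ ≤ s i (∑ k, w i k * x t.castSucc i k) := by
            rw [← hC]; exact (hγprop t hx j₀).2.2 i hRj₀
  -- nonnegativity of the state, by induction
  have hxnn : ∀ t i k, 0 ≤ x t i k := by
    have key : ∀ n : ℕ, ∀ hn : n < N + 1, ∀ i k, 0 ≤ x ⟨n, hn⟩ i k := by
      intro n
      induction n with
      | zero => intro hn i k; have : (⟨0, hn⟩ : Fin (N+1)) = 0 := rfl
                rw [this, hinit]; exact hx0 i k
      | succ m ih =>
        intro hn i k
        have hm : m < N := Nat.lt_of_succ_lt_succ hn
        set t : Fin N := ⟨m, hm⟩ with ht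
        have hcast : t.castSucc = ⟨m, Nat.lt_of_lt_of_le hm (Nat.le_succ N)⟩ := rfl
        have hxm : ∀ i' k', 0 ≤ x t.castSucc i' k' := by
          intro i' k'; rw [hcast]; exact ih _ i' k'
        have hsuccx : x t.succ i k = x ⟨m + 1, hn⟩ i k := rfl
        rw [← hsuccx, hupd t i k]
        have hzle := (hzprop t hxm i k).2
        have hfnn : 0 ≤ ∑ j, f t j i k := by
          apply Finset.sum_nonneg; intro j _
          rw [hf t j i k]
          exact mul_nonneg (hR t j i k) (hzprop t hxm j k).1
        have hstep : x t.castSucc i k + h * (lam t i k + (∑ j, f t j i k) - z t i k)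
            ≥ x t.castSucc i k - h * z t i k := by nlinarith [hlam t i k]
        have hzd : h * z t i k ≤ x t.castSucc i k := by
          have h1 : h * z t i k ≤ h * ((v i k / L i) * x t.castSucc i k) :=
            mul_le_mul_of_nonneg_left hzle hh.le
          have h2 : h * (v i k / L i) ≤ 1 := by
            have hvL : 0 < v i k / L i := div_pos (hv i k) (hL i)
            calc h * (v i k / L i) ≤ (L i / v i k) * (v i k / L i) :=
                  mul_le_mul_of_nonneg_right (hCFL i k) hvL.le
              _ = 1 := by rw [div_mul_div_comm, mul_comm (L i) (v i k)]; exact div_self (mul_pos (hv i k) (hL i)).ne'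
          calc h * z t i k ≤ h * ((v i k / L i) * x t.castSucc i k) := h1
            _ = (h * (v i k / L i)) * x t.castSucc i k := by ring
            _ ≤ 1 * x t.castSucc i k := mul_le_mul_of_nonneg_right h2 (hxm i k)
            _ = x t.castSucc i k := one_mul _
        linarith
    intro t i k
    have : t = ⟨t.val, t.isLt⟩ := rfl
    rw [this]; exact key t.val t.isLt i k
  have hxcast : ∀ (t : Fin N) i k, 0 ≤ x t.castSucc i k := fun t i k => hxnn _ i k
  refine ⟨hxnn, fun t i k => hzprop t (hxcast t) i k, fun t i j k => ?_,
    hf, fun t i => hsupply t (hxcast t) i⟩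
  rw [hf t i j k]
  exact mul_nonneg (hR t i j k) (hzprop t (hxcast t) i k).1
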